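/- Let F be a finite field, m a positive natural number, S ∈ F^m fixed, and let Δ^{(1)}, …, Δ^{(N)} ∈ F × F × F × F^m be N fixed nonzero shifts, where Δ^{(j)} = (Δ^{(j)}_c, Δ^{(j)}_d, Δ^{(j)}_e, Δ^{(j)}_S). If (c, d, e) is drawn uniformly at random from F³, then the probability that there exists some j ∈ {1, …, N} with h'_{c+Δ^{(j)}_c, d+Δ^{(j)}_d, e+Δ^{(j)}_e}(S + Δ^{(j)}_S) = h'_{c,d,e}(S) is at most min(N·(m+1)/|F|, 1). -/

import Mathlib

open Polynomial Finset

lemma dske_card_single {F : Type*} [Field F] [Fintype F] [DecidableEq F]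
    (m : ℕ) (S : Fin m → F) (Δ : F × F × F × (Fin m → F)) (hΔ : Δ ≠ 0) :
    (Finset.univ.filter (fun cde : F × F × F =>
      (cde.2.1 + Δ.2.1) + (cde.1 + Δ.1) * (cde.2.2 + Δ.2.2.1) +
          ∑ i : Fin m, (cde.1 + Δ.1) ^ (i.1 + 2) * (S i + Δ.2.2.2 i) =
        cde.2.1 + cde.1 * cde.2.2 + ∑ i : Fin m, cde.1 ^ (i.1 + 2) * S i)).card
      ≤ (m + 1) * (Fintype.card F) ^ 2 := by
  obtain ⟨Δc, Δd, Δe, ΔS⟩ := Δ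
  simp only at *
  by_cases hc : Δc = 0
  · subst hc
    set q : F[X] := C Δd + C Δe * X + ∑ i : Fin m, C (ΔS i) * X ^ (i.1 + 2) with hqdef
    have hcoeff : ∀ k, q.coeff k =
        (if k = 0 then Δd else 0) + (if k = 1 then Δe else 0) +
          ∑ i : Fin m, if k = i.1 + 2 then ΔS i else 0 := by
      intro k
      simp [q, coeff_C, coeff_C_mul, coeff_X_pow, coeff_X, Finset.sum_ite_eq', mul_ite, eq_comm]
    have hq0 : q ≠ 0 := by
      intro h
      apply hΔ
      have hΔd : Δd = 0 := by
        have := hcoeff 0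
        rw [h] at this
        simpa using this.symm
      have hΔe : Δe = 0 := by
        have := hcoeff 1
        rw [h] at this
        simpa using this.symm
      have hΔS : ΔS = 0 := by
        funext i
        have := hcoeff (i.1 + 2)
        rw [h] at this
        simp only [coeff_zero] at this
        rw [Finset.sum_eq_single i] at this
        · simpa using this.symm
        · intro b _ hb
          rw [if_neg]
          simp only [add_left_inj]
          exact fun hh => hb (Fin.ext hh.symm)
        · simp
      simp [hΔd, hΔe, hΔS, Prod.ext_iff]
    have hdeg : q.natDegree ≤ m + 1 := by
      refine (natDegree_add_le _ _).trans (max_le ?_ ?_)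
      · refine (natDegree_add_le _ _).trans (max_le ?_ ?_)
        · simp
        · exact (natDegree_C_mul_le _ _).trans (by simp)
      · refine natDegree_sum_le_of_forall_le _ _ fun i _ => ?_
        refine (natDegree_C_mul_le _ _).trans ?_
        rw [natDegree_X_pow]
        omega
    calc (Finset.univ.filter (fun cde : F × F × F =>
          (cde.2.1 + Δd) + (cde.1 + 0) * (cde.2.2 + Δe) +
              ∑ i : Fin m, (cde.1 + 0) ^ (i.1 + 2) * (S i + ΔS i) =
            cde.2.1 + cde.1 * cde.2.2 + ∑ i : Fin m, cde.1 ^ (i.1 + 2) * S i)).card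
        ≤ (q.roots.toFinset ×ˢ (Finset.univ : Finset (F × F))).card := by
          apply Finset.card_le_card_of_injOn (fun cde => (cde.1, cde.2))
          · intro cde hcde
            simp only [Finset.mem_coe, Finset.mem_filter, Finset.mem_univ, true_and] at hcde ⊢
            rw [Finset.mem_product]
            refine ⟨?_, Finset.mem_univ _⟩
            rw [Multiset.mem_toFinset, mem_roots hq0]
            have heval : q.eval cde.1 =
                Δd + Δe * cde.1 + ∑ i : Fin m, ΔS i * cde.1 ^ (i.1 + 2) := by
              simp [q, eval_finset_sum]
            rw [IsRoot, heval]
            have hsum : ∑ i : Fin m, ΔS i * cde.1 ^ (i.1 + 2) =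
                (∑ i : Fin m, (cde.1 + 0) ^ (i.1 + 2) * (S i + ΔS i)) -
                  ∑ i : Fin m, cde.1 ^ (i.1 + 2) * S i := by
              rw [← Finset.sum_sub_distrib]
              exact Finset.sum_congr rfl fun i _ => by ring
            rw [hsum]
            linear_combination hcde
          · intro a _ b _ hab
            exact Prod.ext (congrArg Prod.fst hab) (congrArg Prod.snd hab)
      _ ≤ (m + 1) * (Fintype.card F) ^ 2 := by
          rw [Finset.card_product]
          apply Nat.mul_le_mul
          · exact (q.roots.toFinset_card_le).trans (q.card_roots'.trans hdeg)
          · simp [Fintype.card_prod, sq]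
  · calc _ ≤ ((Finset.univ : Finset (F × F))).card := by
          apply Finset.card_le_card_of_injOn (fun cde => (cde.1, cde.2.1))
          · intro _ _; exact Finset.mem_univ _
          · rintro ⟨c1, d1, e1⟩ h1 ⟨c2, d2, e2⟩ h2 hab
            simp only [Prod.mk.injEq] at hab
            obtain ⟨rfl, rfl⟩ := hab
            simp only [Finset.mem_coe, Finset.mem_filter, Finset.mem_univ, true_and] at h1 h2
            have he : e1 = e2 := by
              apply mul_left_cancel₀ hc
              linear_combination h1 - h2
            rw [he]
      _ ≤ (m + 1) * (Fintype.card F) ^ 2 := by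
          have : (Finset.univ : Finset (F × F)).card = Fintype.card F ^ 2 := by
            simp [Fintype.card_prod, sq]
          rw [this]
          exact Nat.le_mul_of_pos_left _ (by omega)

/-- For a finite field `F`, a positive `m`, a fixed `S ∈ F^m` and `N` fixed nonzero shifts
`Δ⁽¹⁾, …, Δ⁽ᴺ⁾ ∈ F × F × F × F^m`, the probability over a uniformly random
`(c, d, e) ∈ F³` that some shift passes validation, i.e. that there is a `j` with
`h'_{c+Δc⁽ʲ⁾, d+Δd⁽ʲ⁾, e+Δe⁽ʲ⁾}(S + ΔS⁽ʲ⁾) = h'_{c,d,e}(S)`, where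
`h'_{c,d,e}(S) = d + c·e + ∑_{j=1}^m c^{j+1} Sⱼ`, is at most
`min(N·(m+1)/|F|, 1)`. -/
theorem dske_secret_tag_shift_union_bound {F : Type*} [Field F] [Fintype F]
    (m : ℕ) (hm : 0 < m) (S : Fin m → F) (N : ℕ)
    (Δ : Fin N → F × F × F × (Fin m → F)) (hΔ : ∀ j, Δ j ≠ 0) :
    (Nat.card {cde : F × F × F // ∃ j : Fin N,
        (cde.2.1 + (Δ j).2.1) + (cde.1 + (Δ j).1) * (cde.2.2 + (Δ j).2.2.1) +
            ∑ i : Fin m, (cde.1 + (Δ j).1) ^ (i.1 + 2) * (S i + (Δ j).2.2.2 i) =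
          cde.2.1 + cde.1 * cde.2.2 + ∑ i : Fin m, cde.1 ^ (i.1 + 2) * S i} : ℝ) /
        (Fintype.card F : ℝ) ^ 3 ≤
      min ((N : ℝ) * (m + 1) / Fintype.card F) 1 := by
  classical
  set P : (F × F × F) → Prop := fun cde => ∃ j : Fin N,
        (cde.2.1 + (Δ j).2.1) + (cde.1 + (Δ j).1) * (cde.2.2 + (Δ j).2.2.1) +
            ∑ i : Fin m, (cde.1 + (Δ j).1) ^ (i.1 + 2) * (S i + (Δ j).2.2.2 i) =
          cde.2.1 + cde.1 * cde.2.2 + ∑ i : Fin m, cde.1 ^ (i.1 + 2) * S i with hP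
  have hKfin : Nat.card {cde : F × F × F // P cde} = (Finset.univ.filter P).card := by
    rw [Nat.card_eq_fintype_card, Fintype.card_subtype]
  have hkey : Nat.card {cde : F × F × F // P cde} ≤ N * ((m + 1) * (Fintype.card F) ^ 2) := by
    rw [hKfin]
    calc (Finset.univ.filter P).card
        ≤ (Finset.univ.biUnion fun j : Fin N => Finset.univ.filter (fun cde : F × F × F =>
            (cde.2.1 + (Δ j).2.1) + (cde.1 + (Δ j).1) * (cde.2.2 + (Δ j).2.2.1) +
                ∑ i : Fin m, (cde.1 + (Δ j).1) ^ (i.1 + 2) * (S i + (Δ j).2.2.2 i) =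
              cde.2.1 + cde.1 * cde.2.2 + ∑ i : Fin m, cde.1 ^ (i.1 + 2) * S i)).card := by
          apply Finset.card_le_card
          intro x hx
          simp only [Finset.mem_filter, Finset.mem_univ, true_and, hP] at hx
          obtain ⟨j, hj⟩ := hx
          exact Finset.mem_biUnion.2 ⟨j, Finset.mem_univ _,
            Finset.mem_filter.2 ⟨Finset.mem_univ _, hj⟩⟩
      _ ≤ ∑ j : Fin N, (Finset.univ.filter (fun cde : F × F × F =>
            (cde.2.1 + (Δ j).2.1) + (cde.1 + (Δ j).1) * (cde.2.2 + (Δ j).2.2.1) +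
                ∑ i : Fin m, (cde.1 + (Δ j).1) ^ (i.1 + 2) * (S i + (Δ j).2.2.2 i) =
              cde.2.1 + cde.1 * cde.2.2 + ∑ i : Fin m, cde.1 ^ (i.1 + 2) * S i)).card :=
          Finset.card_biUnion_le
      _ ≤ ∑ _j : Fin N, (m + 1) * (Fintype.card F) ^ 2 :=
          Finset.sum_le_sum fun j _ => dske_card_single m S (Δ j) (hΔ j)
      _ = N * ((m + 1) * (Fintype.card F) ^ 2) := by simp [mul_comm]
  have hcard3 : Nat.card {cde : F × F × F // P cde} ≤ (Fintype.card F) ^ 3 := by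
    rw [hKfin]
    calc (Finset.univ.filter P).card ≤ (Finset.univ : Finset (F × F × F)).card :=
          Finset.card_le_card (Finset.filter_subset _ _)
      _ = (Fintype.card F) ^ 3 := by simp [Fintype.card_prod]; ring
  have hQ : (0 : ℝ) < (Fintype.card F : ℝ) := by
    exact_mod_cast Fintype.card_pos
  refine le_min ?_ ?_
  · have h1 : (Nat.card {cde : F × F × F // P cde} : ℝ)
        ≤ (N : ℝ) * ((m : ℝ) + 1) * (Fintype.card F : ℝ) ^ 2 := by
      have := hkey
      push_cast
      calc (Nat.card {cde : F × F × F // P cde} : ℝ)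
          ≤ ((N * ((m + 1) * (Fintype.card F) ^ 2) : ℕ) : ℝ) := by exact_mod_cast this
        _ = (N : ℝ) * ((m : ℝ) + 1) * (Fintype.card F : ℝ) ^ 2 := by push_cast; ring
    calc (Nat.card {cde : F × F × F // P cde} : ℝ) / (Fintype.card F : ℝ) ^ 3
        ≤ ((N : ℝ) * ((m : ℝ) + 1) * (Fintype.card F : ℝ) ^ 2) / (Fintype.card F : ℝ) ^ 3 := by
          gcongr
      _ = (N : ℝ) * ((m : ℝ) + 1) / (Fintype.card F : ℝ) := by
          field_simp
  · rw [div_le_one (by positivity)]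
    calc (Nat.card {cde : F × F × F // P cde} : ℝ) ≤ ((Fintype.card F ^ 3 : ℕ) : ℝ) := by
          exact_mod_cast hcard3
      _ = (Fintype.card F : ℝ) ^ 3 := by push_cast; ring
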